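/- Let m, n ≥ 1 and let c : Fin m × Fin n → ℝ be an arbitrary cost function. Then there exists a coupling γ of the uniform measures (a matrix γ : Fin m → Fin n → ℝ with γ(i,j) ≥ 0 for all i,j, ∑_j γ(i,j) = 1/m for every i, and ∑_i γ(i,j) = 1/n for every j) such that: (1) γ minimizes the Kantorovich cost ∑_{i,j} c(i,j) γ(i,j) among all such couplings; (2) for every i, the number of indices j with γ(i,j) ≠ 0 is at most n/gcd(m,n); and (3) for every j, the number of indices i with γ(i,j) ≠ 0 is at most m/gcd(m,n). -/

import Mathlib

open Finset

lemma card_filter_fst_eq {α β : Type*} [Fintype α] [Fintype β] [DecidableEq α] (i : α) :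
    (Finset.univ.filter (fun p : α × β => p.1 = i)).card = Fintype.card β := by
  have h : (Finset.univ.filter (fun p : α × β => p.1 = i)) = {i} ×ˢ Finset.univ := by
    ext p
    simp only [Finset.mem_filter, Finset.mem_univ, true_and, Finset.mem_product,
      Finset.mem_singleton]
    tauto
  rw [h, Finset.card_product]
  simp

lemma card_filter_comp_equiv {α β : Type*} [Fintype α] [Fintype β] (e : α ≃ β)
    (Q : β → Prop) [DecidablePred Q] :
    (Finset.univ.filter (fun p : α => Q (e p))).card = (Finset.univ.filter Q).card := by
  rw [← Fintype.card_subtype, ← Fintype.card_subtype]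
  exact Fintype.card_congr (e.subtypeEquiv fun a => Iff.rfl)

lemma sum_comp_fst_equiv {α β : Type*} [Fintype α] [Fintype β] (f : α → ℝ) :
    ∑ p : α × β, f p.1 = (Fintype.card β : ℝ) * ∑ i, f i := by
  rw [Fintype.sum_prod_type]
  simp [Finset.mul_sum, Finset.sum_mul, mul_comm]

/-- There is an optimal coupling of the uniform measures on `m` and `n` points
such that each row has at most `n / gcd(m,n)` nonzero entries and each column
has at most `m / gcd(m,n)` nonzero entries. -/
theorem kantorovich_sparse_solution
    (m n : ℕ) (hm : 1 ≤ m) (hn : 1 ≤ n) (c : Fin m × Fin n → ℝ) :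
    ∃ γ : Fin m → Fin n → ℝ,
      (∀ i j, 0 ≤ γ i j) ∧
      (∀ i, ∑ j, γ i j = 1 / m) ∧
      (∀ j, ∑ i, γ i j = 1 / n) ∧
      (∀ γ' : Fin m → Fin n → ℝ,
        (∀ i j, 0 ≤ γ' i j) →
        (∀ i, ∑ j, γ' i j = 1 / m) →
        (∀ j, ∑ i, γ' i j = 1 / n) →
        ∑ i, ∑ j, c (i, j) * γ i j ≤ ∑ i, ∑ j, c (i, j) * γ' i j) ∧
      (∀ i, (Finset.univ.filter fun j => γ i j ≠ 0).card ≤ n / Nat.gcd m n) ∧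
      (∀ j, (Finset.univ.filter fun i => γ i j ≠ 0).card ≤ m / Nat.gcd m n) := by
  classical
  set d := Nat.gcd m n with hd
  set a := m / d with ha
  set b := n / d with hb
  have hd0 : 0 < d := Nat.gcd_pos_of_pos_left n hm
  have hma : d * a = m := Nat.mul_div_cancel' (Nat.gcd_dvd_left m n)
  have hnb : d * b = n := Nat.mul_div_cancel' (Nat.gcd_dvd_right m n)
  have ha0 : 0 < a := Nat.div_pos (Nat.le_of_dvd hm (Nat.gcd_dvd_left m n)) hd0
  have hb0 : 0 < b := Nat.div_pos (Nat.le_of_dvd hn (Nat.gcd_dvd_right m n)) hd0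
  have hcard : m * b = n * a := by
    rw [← hma, ← hnb]; ring
  -- the blown-up space
  have e : (Fin m × Fin b) ≃ Fin n × Fin a := Fintype.equivOfCardEq (by simp [hcard])
  -- fiber cardinalities
  have hfibφ : ∀ i : Fin m, (Finset.univ.filter (fun p : (Fin m × Fin b) => p.1 = i)).card = b := by
    intro i; rw [card_filter_fst_eq]; simp
  have hfibψ : ∀ j : Fin n, (Finset.univ.filter (fun p : (Fin m × Fin b) => (e p).1 = j)).card = a := by
    intro j
    rw [card_filter_comp_equiv e (fun q : Fin n × Fin a => q.1 = j), card_filter_fst_eq]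
    simp
  -- the objective on permutations
  set F : Equiv.Perm (Fin m × Fin b) → ℝ := fun σ => ∑ p : (Fin m × Fin b), c (p.1, (e (σ p)).1) with hF
  obtain ⟨σ₀, -, hσ₀⟩ := Finset.exists_min_image Finset.univ F ⟨1, Finset.mem_univ 1⟩
  have hσ₀' : ∀ σ : Equiv.Perm (Fin m × Fin b), F σ₀ ≤ F σ := fun σ => hσ₀ σ (Finset.mem_univ σ)
  -- the coupling
  set N : Fin m → Fin n → ℕ :=
    fun i j => (Finset.univ.filter (fun p : (Fin m × Fin b) => p.1 = i ∧ (e (σ₀ p)).1 = j)).card with hN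
  set L : ℝ := (m : ℝ) * b with hL
  have hL0 : 0 < L := by
    have h1 : (0:ℝ) < m := by exact_mod_cast hm
    have h2 : (0:ℝ) < b := by exact_mod_cast hb0
    exact mul_pos h1 h2
  set γ : Fin m → Fin n → ℝ := fun i j => (N i j : ℝ) / L with hγ
  -- row sums of N
  have hrowN : ∀ i, ∑ j, N i j = b := by
    intro i
    have hmap : ∀ p ∈ Finset.univ.filter (fun p : (Fin m × Fin b) => p.1 = i),
        (e (σ₀ p)).1 ∈ (Finset.univ : Finset (Fin n)) := fun _ _ => Finset.mem_univ _
    calc ∑ j, N i j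
        = ∑ j, ((Finset.univ.filter (fun p : (Fin m × Fin b) => p.1 = i)).filter
            (fun p => (e (σ₀ p)).1 = j)).card := by
          refine Finset.sum_congr rfl fun j _ => ?_
          simp only [hN]
          rw [Finset.filter_filter]
      _ = (Finset.univ.filter (fun p : (Fin m × Fin b) => p.1 = i)).card :=
          (Finset.card_eq_sum_card_fiberwise hmap).symm
      _ = b := hfibφ i
  have hcolN : ∀ j, ∑ i, N i j = a := by
    intro j
    have hmap : ∀ p ∈ Finset.univ.filter (fun p : (Fin m × Fin b) => (e (σ₀ p)).1 = j),
        p.1 ∈ (Finset.univ : Finset (Fin m)) := fun _ _ => Finset.mem_univ _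
    have h2 : (Finset.univ.filter (fun p : (Fin m × Fin b) => (e (σ₀ p)).1 = j)).card = a := by
      rw [card_filter_comp_equiv σ₀ (fun q : (Fin m × Fin b) => (e q).1 = j)]
      exact hfibψ j
    calc ∑ i, N i j
        = ∑ i, ((Finset.univ.filter (fun p : (Fin m × Fin b) => (e (σ₀ p)).1 = j)).filter
            (fun p => p.1 = i)).card := by
          refine Finset.sum_congr rfl fun i _ => ?_
          simp only [hN]
          rw [Finset.filter_filter]
          congr 1
          ext p
          simp only [Finset.mem_filter]
          tauto
      _ = (Finset.univ.filter (fun p : (Fin m × Fin b) => (e (σ₀ p)).1 = j)).card :=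
          (Finset.card_eq_sum_card_fiberwise hmap).symm
      _ = a := h2
  -- basic properties
  have hpos : ∀ i j, 0 ≤ γ i j :=
    fun i j => div_nonneg (Nat.cast_nonneg _) hL0.le
  have hrow : ∀ i, ∑ j, γ i j = 1 / m := by
    intro i
    rw [hγ]
    simp only
    rw [← Finset.sum_div]
    have : ∑ j, ((N i j : ℝ)) = (b : ℝ) := by
      exact_mod_cast hrowN i
    rw [this, hL]
    have hb' : (b:ℝ) ≠ 0 := by exact_mod_cast hb0.ne'
    have hm' : (m:ℝ) ≠ 0 := by exact_mod_cast (Nat.pos_of_ne_zero (by omega)).ne'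
    field_simp
  have hcol : ∀ j, ∑ i, γ i j = 1 / n := by
    intro j
    rw [hγ]
    simp only
    rw [← Finset.sum_div]
    have : ∑ i, ((N i j : ℝ)) = (a : ℝ) := by
      exact_mod_cast hcolN j
    rw [this, hL]
    have hmb : (m:ℝ) * b = (n:ℝ) * a := by exact_mod_cast hcard
    have ha' : (a:ℝ) ≠ 0 := by exact_mod_cast ha0.ne'
    have hn' : (n:ℝ) ≠ 0 := by exact_mod_cast (Nat.pos_of_ne_zero (by omega)).ne'
    rw [hmb]
    field_simp
  -- sparsity
  have hsparseRow : ∀ i, (Finset.univ.filter fun j => γ i j ≠ 0).card ≤ b := by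
    intro i
    have hsub : (Finset.univ.filter fun j => γ i j ≠ 0) ⊆
        (Finset.univ.filter (fun p : (Fin m × Fin b) => p.1 = i)).image (fun p => (e (σ₀ p)).1) := by
      intro j hj
      simp only [Finset.mem_filter, Finset.mem_univ, true_and] at hj
      have hNne : N i j ≠ 0 := by
        intro h0
        apply hj
        rw [hγ]; simp [h0]
      obtain ⟨p, hp⟩ := Finset.card_pos.mp (Nat.pos_of_ne_zero hNne)
      simp only [Finset.mem_filter, Finset.mem_univ, true_and] at hp
      apply Finset.mem_image.mpr
      exact ⟨p, by simp [hp.1], hp.2⟩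
    calc (Finset.univ.filter fun j => γ i j ≠ 0).card
        ≤ _ := Finset.card_le_card hsub
      _ ≤ (Finset.univ.filter (fun p : (Fin m × Fin b) => p.1 = i)).card := Finset.card_image_le
      _ = b := hfibφ i
  have hsparseCol : ∀ j, (Finset.univ.filter fun i => γ i j ≠ 0).card ≤ a := by
    intro j
    have hsub : (Finset.univ.filter fun i => γ i j ≠ 0) ⊆
        (Finset.univ.filter (fun p : (Fin m × Fin b) => (e (σ₀ p)).1 = j)).image (fun p => p.1) := by
      intro i hi
      simp only [Finset.mem_filter, Finset.mem_univ, true_and] at hi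
      have hNne : N i j ≠ 0 := by
        intro h0
        apply hi
        rw [hγ]; simp [h0]
      obtain ⟨p, hp⟩ := Finset.card_pos.mp (Nat.pos_of_ne_zero hNne)
      simp only [Finset.mem_filter, Finset.mem_univ, true_and] at hp
      apply Finset.mem_image.mpr
      exact ⟨p, by simp [hp.2], hp.1⟩
    calc (Finset.univ.filter fun i => γ i j ≠ 0).card
        ≤ _ := Finset.card_le_card hsub
      _ ≤ (Finset.univ.filter (fun p : (Fin m × Fin b) => (e (σ₀ p)).1 = j)).card := Finset.card_image_le
      _ = a := by
          rw [card_filter_comp_equiv σ₀ (fun q : (Fin m × Fin b) => (e q).1 = j)]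
          exact hfibψ j
  -- cost of γ equals F σ₀ / L
  have hcostγ : ∑ i, ∑ j, c (i, j) * γ i j = F σ₀ / L := by
    have key : ∑ i, ∑ j, c (i, j) * (N i j : ℝ) = F σ₀ := by
      have hmap : ∀ p ∈ (Finset.univ : Finset (Fin m × Fin b)),
          ((p.1, (e (σ₀ p)).1) : Fin m × Fin n) ∈ (Finset.univ : Finset (Fin m × Fin n)) :=
        fun _ _ => Finset.mem_univ _
      have hfib := Finset.sum_fiberwise_of_maps_to hmap
        (fun p : (Fin m × Fin b) => c (p.1, (e (σ₀ p)).1))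
      simp only [hF]
      rw [← hfib, Fintype.sum_prod_type]
      refine Finset.sum_congr rfl fun i _ => Finset.sum_congr rfl fun j _ => ?_
      have hconst : ∀ p ∈ Finset.univ.filter
          (fun p : (Fin m × Fin b) => ((p.1, (e (σ₀ p)).1) : Fin m × Fin n) = (i, j)),
          c (p.1, (e (σ₀ p)).1) = c (i, j) := by
        intro p hp
        simp only [Finset.mem_filter] at hp
        rw [hp.2]
      rw [Finset.sum_congr rfl hconst, Finset.sum_const, nsmul_eq_mul]
      have hfe : Finset.univ.filter
          (fun p : (Fin m × Fin b) => ((p.1, (e (σ₀ p)).1) : Fin m × Fin n) = (i, j))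
          = Finset.univ.filter (fun p : (Fin m × Fin b) => p.1 = i ∧ (e (σ₀ p)).1 = j) := by
        ext p
        simp [Prod.ext_iff]
      rw [hfe]
      simp only [hN]
      ring
    rw [hγ]
    simp only
    rw [← key]
    rw [Finset.sum_div]
    refine Finset.sum_congr rfl fun i _ => ?_
    rw [Finset.sum_div]
    refine Finset.sum_congr rfl fun j _ => ?_
    ring
  -- optimality
  have hopt : ∀ γ' : Fin m → Fin n → ℝ,
      (∀ i j, 0 ≤ γ' i j) →
      (∀ i, ∑ j, γ' i j = 1 / m) →
      (∀ j, ∑ i, γ' i j = 1 / n) →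
      ∑ i, ∑ j, c (i, j) * γ i j ≤ ∑ i, ∑ j, c (i, j) * γ' i j := by
    intro γ' hpos' hrow' hcol'
    set M : Matrix (Fin m × Fin b) (Fin m × Fin b) ℝ := fun p q => (d : ℝ) * γ' p.1 (e q).1 with hM
    have hmr : (m:ℝ) ≠ 0 := by exact_mod_cast (Nat.pos_of_ne_zero (by omega)).ne'
    have hnr : (n:ℝ) ≠ 0 := by exact_mod_cast (Nat.pos_of_ne_zero (by omega)).ne'
    have hdar : (d:ℝ) * a = m := by exact_mod_cast hma
    have hdbr : (d:ℝ) * b = n := by exact_mod_cast hnb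
    have hMds : M ∈ doublyStochastic ℝ (Fin m × Fin b) := by
      rw [mem_doublyStochastic_iff_sum]
      refine ⟨fun p q => by exact mul_nonneg (Nat.cast_nonneg _) (hpos' _ _), ?_, ?_⟩
      · intro p
        rw [← Finset.mul_sum]
        have h1 : ∑ q : (Fin m × Fin b), γ' p.1 (e q).1 = (a : ℝ) * ∑ j, γ' p.1 j := by
          rw [Equiv.sum_comp e (fun q : Fin n × Fin a => γ' p.1 q.1)]
          rw [sum_comp_fst_equiv (fun j => γ' p.1 j)]
          simp
        rw [h1, hrow' p.1, ← mul_assoc, hdar]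
        field_simp
      · intro q
        rw [← Finset.mul_sum]
        have h1 : ∑ p : (Fin m × Fin b), γ' p.1 (e q).1 = (b : ℝ) * ∑ i, γ' i (e q).1 := by
          rw [sum_comp_fst_equiv (fun i => γ' i (e q).1)]
          simp
        rw [h1, hcol' (e q).1, ← mul_assoc, hdbr]
        field_simp
    obtain ⟨w, hw0, hw1, hwM⟩ := exists_eq_sum_perm_of_mem_doublyStochastic hMds
    -- value of the linear functional on M
    have hfM : ∑ p : (Fin m × Fin b), ∑ q : (Fin m × Fin b), c (p.1, (e q).1) * M p q
        = L * ∑ i, ∑ j, c (i, j) * γ' i j := by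
      have h1 : ∀ p : (Fin m × Fin b), ∑ q : (Fin m × Fin b), c (p.1, (e q).1) * M p q
          = (d:ℝ) * ((a:ℝ) * ∑ j, c (p.1, j) * γ' p.1 j) := by
        intro p
        rw [hM]
        simp only
        have : ∑ q : (Fin m × Fin b), c (p.1, (e q).1) * ((d:ℝ) * γ' p.1 (e q).1)
            = (d:ℝ) * ∑ q : (Fin m × Fin b), c (p.1, (e q).1) * γ' p.1 (e q).1 := by
          rw [Finset.mul_sum]; refine Finset.sum_congr rfl fun q _ => by ring
        rw [this]
        congr 1
        rw [Equiv.sum_comp e (fun q : Fin n × Fin a => c (p.1, q.1) * γ' p.1 q.1)]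
        rw [sum_comp_fst_equiv (fun j => c (p.1, j) * γ' p.1 j)]
        simp
      rw [Finset.sum_congr rfl fun p _ => h1 p]
      rw [sum_comp_fst_equiv (fun i => (d:ℝ) * ((a:ℝ) * ∑ j, c (i, j) * γ' i j))]
      simp only [Fintype.card_fin]
      rw [hL, Finset.mul_sum, Finset.mul_sum]
      refine Finset.sum_congr rfl fun i _ => ?_
      rw [← hdar]
      ring
    -- lower bound via Birkhoff decomposition
    have hlow : F σ₀ ≤ ∑ p : (Fin m × Fin b), ∑ q : (Fin m × Fin b), c (p.1, (e q).1) * M p q := by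
      have hexp : ∑ p : (Fin m × Fin b), ∑ q : (Fin m × Fin b), c (p.1, (e q).1) * M p q
          = ∑ σ : Equiv.Perm (Fin m × Fin b), w σ * F σ := by
        rw [← hwM]
        have h1 : ∀ p q : (Fin m × Fin b), c (p.1, (e q).1) * (∑ σ : Equiv.Perm (Fin m × Fin b), w σ • σ.permMatrix ℝ) p q
            = ∑ σ : Equiv.Perm (Fin m × Fin b), w σ * (c (p.1, (e q).1) * (σ.permMatrix ℝ) p q) := by
          intro p q
          simp only [Finset.sum_apply, Matrix.sum_apply, Pi.smul_apply, Matrix.smul_apply,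
            smul_eq_mul]
          rw [Finset.mul_sum]
          refine Finset.sum_congr rfl fun σ _ => by ring
        calc ∑ p : (Fin m × Fin b), ∑ q : (Fin m × Fin b), c (p.1, (e q).1) * (∑ σ : Equiv.Perm (Fin m × Fin b), w σ • σ.permMatrix ℝ) p q
            = ∑ p : (Fin m × Fin b), ∑ q : (Fin m × Fin b), ∑ σ : Equiv.Perm (Fin m × Fin b),
                w σ * (c (p.1, (e q).1) * (σ.permMatrix ℝ) p q) := by
              refine Finset.sum_congr rfl fun p _ => Finset.sum_congr rfl fun q _ => h1 p q
          _ = ∑ p : (Fin m × Fin b), ∑ σ : Equiv.Perm (Fin m × Fin b), ∑ q : (Fin m × Fin b),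
                w σ * (c (p.1, (e q).1) * (σ.permMatrix ℝ) p q) := by
              refine Finset.sum_congr rfl fun p _ => Finset.sum_comm
          _ = ∑ σ : Equiv.Perm (Fin m × Fin b), ∑ p : (Fin m × Fin b), ∑ q : (Fin m × Fin b),
                w σ * (c (p.1, (e q).1) * (σ.permMatrix ℝ) p q) := Finset.sum_comm
          _ = ∑ σ : Equiv.Perm (Fin m × Fin b), w σ * F σ := by
              refine Finset.sum_congr rfl fun σ _ => ?_
              simp only [← Finset.mul_sum]
              congr 1
              simp only [hF]
              refine Finset.sum_congr rfl fun p _ => ?_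
              have : ∀ q : (Fin m × Fin b), (σ.permMatrix ℝ) p q = if σ p = q then 1 else 0 := by
                intro q
                simp [Equiv.Perm.permMatrix, PEquiv.toMatrix_apply, Equiv.toPEquiv_apply]
              simp only [this, mul_ite, mul_one, mul_zero]
              rw [Finset.sum_ite_eq (Finset.univ) (σ p) (fun q => c (p.1, (e q).1))]
              simp
      rw [hexp]
      calc F σ₀ = ∑ σ : Equiv.Perm (Fin m × Fin b), w σ * F σ₀ := by
            rw [← Finset.sum_mul, hw1, one_mul]
        _ ≤ ∑ σ : Equiv.Perm (Fin m × Fin b), w σ * F σ :=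
            Finset.sum_le_sum fun σ _ => mul_le_mul_of_nonneg_left (hσ₀' σ) (hw0 σ)
    rw [hcostγ]
    rw [div_le_iff₀ hL0]
    calc F σ₀ ≤ ∑ p : (Fin m × Fin b), ∑ q : (Fin m × Fin b), c (p.1, (e q).1) * M p q := hlow
      _ = L * ∑ i, ∑ j, c (i, j) * γ' i j := hfM
      _ = (∑ i, ∑ j, c (i, j) * γ' i j) * L := by ring
  exact ⟨γ, hpos, hrow, hcol, hopt, hsparseRow, hsparseCol⟩
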